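/- Let (R, m) ⊆ (T, n) be a module-finite extension of commutative noetherian local rings such that T is a free R-module. Assume that the zero-dimensional local ring T/mT is Gorenstein, i.e., its socle Ann_{T/mT}(n·(T/mT)) is a one-dimensional vector space over the residue field T/n. Then for any ideal J ⊆ T, there exists a retraction ρ : T/J → R (an R-module homomorphism with ρ(1) = 1) if and only if Ann_T(J) is not contained in mT. -/

import Mathlib

open IsLocalRing

private lemma mem_smul_top_iff_coord {R M ι : Type*} [CommRing R] [AddCommGroup M] [Module R M]
    [Fintype ι] (b : Module.Basis ι R M) (I : Ideal R) (x : M) :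
    x ∈ I • (⊤ : Submodule R M) ↔ ∀ i, b.repr x i ∈ I := by
  constructor
  · intro hx
    refine Submodule.smul_induction_on hx ?_ ?_
    · intro r hr n _ i
      rw [map_smul, Finsupp.smul_apply, smul_eq_mul]
      exact I.mul_mem_right _ hr
    · intro x y hx hy i
      rw [map_add, Finsupp.add_apply]
      exact I.add_mem (hx i) (hy i)
  · intro h
    rw [← b.sum_repr x]
    exact Submodule.sum_mem _ fun i _ => Submodule.smul_mem_smul (h i) Submodule.mem_top

private lemma mem_map_iff_coord {R T ι : Type*} [CommRing R] [CommRing T] [Algebra R T]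
    [Fintype ι] (b : Module.Basis ι R T) (I : Ideal R) (x : T) :
    x ∈ I.map (algebraMap R T) ↔ ∀ i, b.repr x i ∈ I := by
  rw [← mem_smul_top_iff_coord b, Ideal.smul_top_eq_map]
  rfl

private lemma socle_divides {B : Type*} [CommRing B] [IsLocalRing B]
    (hnil : IsNilpotent (IsLocalRing.maximalIdeal B)) (s : B)
    (hkill : ∀ a ∈ IsLocalRing.maximalIdeal B, a * s = 0)
    (hgen : ∀ t : B, (∀ a ∈ IsLocalRing.maximalIdeal B, a * t = 0) → ∃ c : B, t = c * s)
    (a : B) (ha : a ≠ 0) : ∃ c : B, c * a = s := by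
  classical
  obtain ⟨N, hN⟩ := hnil
  have hP : ∃ i, (IsLocalRing.maximalIdeal B) ^ i * Ideal.span {a} = ⊥ :=
    ⟨N, by rw [hN, Ideal.zero_eq_bot, Ideal.bot_mul]⟩
  set i0 := Nat.find hP with hi0
  have hi0pos : 0 < i0 := by
    rcases Nat.eq_zero_or_pos i0 with h | h
    · exfalso
      have := Nat.find_spec hP
      rw [← hi0, h, pow_zero, one_mul, Ideal.span_singleton_eq_bot] at this
      exact ha this
    · exact h
  have h1 : (IsLocalRing.maximalIdeal B) ^ (i0 - 1) * Ideal.span {a} ≠ ⊥ :=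
    Nat.find_min hP (by omega)
  have h2 : (IsLocalRing.maximalIdeal B) ^ (i0 - 1 + 1) * Ideal.span {a} = ⊥ := by
    have : i0 - 1 + 1 = i0 := by omega
    rw [this]
    exact Nat.find_spec hP
  obtain ⟨y, hy_mem, hy_ne⟩ := Submodule.exists_mem_ne_zero_of_ne_bot h1
  have hy_span : y ∈ Ideal.span {a} := Ideal.mul_le_right hy_mem
  obtain ⟨c, hc⟩ := Ideal.mem_span_singleton'.mp hy_span
  have hy_socle : ∀ x ∈ IsLocalRing.maximalIdeal B, x * y = 0 := by
    intro x hx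
    have hmem : x * y ∈ (IsLocalRing.maximalIdeal B) ^ (i0 - 1 + 1) * Ideal.span {a} := by
      rw [pow_succ', mul_assoc]
      exact Ideal.mul_mem_mul hx hy_mem
    rw [h2] at hmem
    simpa using hmem
  obtain ⟨r, hr⟩ := hgen y hy_socle
  have hrunit : IsUnit r := by
    by_contra h
    have hrm : r ∈ IsLocalRing.maximalIdeal B := (IsLocalRing.mem_maximalIdeal r).mpr (mem_nonunits_iff.mpr h)
    exact hy_ne (by rw [hr, hkill r hrm])
  obtain ⟨v, hv⟩ := hrunit
  refine ⟨(↑v⁻¹ : B) * c, ?_⟩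
  rw [mul_assoc, hc, hr, ← hv, ← mul_assoc, Units.inv_mul, one_mul]

theorem stmt12 (R T : Type) [CommRing R] [IsNoetherianRing R] [IsLocalRing R]
    [CommRing T] [IsNoetherianRing T] [IsLocalRing T]
    [Algebra R T] (hinj : Function.Injective (algebraMap R T))
    [Module.Finite R T] [Module.Free R T]
    -- the socle of `T/mT` is a one-dimensional `T/n`-vector space: it has a nonzero
    -- element `s` of which every element of the socle is a multiple
    (hGor : ∃ s : T ⧸ (IsLocalRing.maximalIdeal R).map (algebraMap R T),
      (∀ x ∈ IsLocalRing.maximalIdeal T,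
        Ideal.Quotient.mk ((IsLocalRing.maximalIdeal R).map (algebraMap R T)) x * s = 0) ∧
      s ≠ 0 ∧
      ∀ t : T ⧸ (IsLocalRing.maximalIdeal R).map (algebraMap R T),
        (∀ x ∈ IsLocalRing.maximalIdeal T,
          Ideal.Quotient.mk ((IsLocalRing.maximalIdeal R).map (algebraMap R T)) x * t = 0) →
        ∃ r : T,
          t = Ideal.Quotient.mk ((IsLocalRing.maximalIdeal R).map (algebraMap R T)) r * s)
    (J : Ideal T) :
    (∃ ρ : (T ⧸ J) →ₗ[R] R, ρ 1 = 1) ↔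
      ¬ (Submodule.annihilator J ≤ (IsLocalRing.maximalIdeal R).map (algebraMap R T)) := by
  classical
  obtain ⟨s, hs_socle, hs_ne, hs_gen⟩ := hGor
  let b : Module.Basis (Module.Free.ChooseBasisIndex R T) R T := Module.Free.chooseBasis R T
  constructor
  · -- hard direction
    rintro ⟨ρ, hρ⟩ hle
    haveI : Nontrivial (T ⧸ (IsLocalRing.maximalIdeal R).map (algebraMap R T)) :=
      ⟨⟨s, 0, hs_ne⟩⟩
    haveI : IsLocalRing (T ⧸ (IsLocalRing.maximalIdeal R).map (algebraMap R T)) :=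
      IsLocalRing.of_surjective' (Ideal.Quotient.mk _) Ideal.Quotient.mk_surjective
    have hmT_ne : (IsLocalRing.maximalIdeal R).map (algebraMap R T) ≠ ⊤ := by
      intro h
      have h1 : (1 : T) ∈ (IsLocalRing.maximalIdeal R).map (algebraMap R T) :=
        h ▸ Submodule.mem_top
      exact one_ne_zero
        (Ideal.Quotient.eq_zero_iff_mem.mpr h1 :
          (1 : T ⧸ (IsLocalRing.maximalIdeal R).map (algebraMap R T)) = 0)
    have hmTn : (IsLocalRing.maximalIdeal R).map (algebraMap R T) ≤ IsLocalRing.maximalIdeal T :=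
      IsLocalRing.le_maximalIdeal hmT_ne
    have hmem_nA : ∀ x : T, x ∈ IsLocalRing.maximalIdeal T →
        Ideal.Quotient.mk ((IsLocalRing.maximalIdeal R).map (algebraMap R T)) x ∈
          IsLocalRing.maximalIdeal (T ⧸ (IsLocalRing.maximalIdeal R).map (algebraMap R T)) := by
      intro x hx
      refine (IsLocalRing.mem_maximalIdeal _).mpr (mem_nonunits_iff.mpr ?_)
      intro hunit
      obtain ⟨v, hv⟩ := hunit
      obtain ⟨w, hw⟩ := Ideal.Quotient.mk_surjective
        ((↑v⁻¹ : T ⧸ (IsLocalRing.maximalIdeal R).map (algebraMap R T)))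
      have hmk : Ideal.Quotient.mk ((IsLocalRing.maximalIdeal R).map (algebraMap R T)) (x * w) =
          Ideal.Quotient.mk ((IsLocalRing.maximalIdeal R).map (algebraMap R T)) 1 := by
        rw [map_mul, ← hv, hw, map_one, Units.mul_inv]
      have hsub : x * w - 1 ∈ (IsLocalRing.maximalIdeal R).map (algebraMap R T) :=
        Ideal.Quotient.eq.mp hmk
      have hxw : x * w ∈ IsLocalRing.maximalIdeal T := Ideal.mul_mem_right _ _ hx
      have h1 : (1 : T) ∈ IsLocalRing.maximalIdeal T := by
        have := Ideal.sub_mem _ hxw (hmTn hsub)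
        simpa using this
      exact (IsLocalRing.maximalIdeal.isMaximal T).ne_top ((Ideal.eq_top_iff_one _).mpr h1)
    have hnA_lift : ∀ a : T ⧸ (IsLocalRing.maximalIdeal R).map (algebraMap R T),
        a ∈ IsLocalRing.maximalIdeal (T ⧸ (IsLocalRing.maximalIdeal R).map (algebraMap R T)) →
        ∃ x ∈ IsLocalRing.maximalIdeal T,
          Ideal.Quotient.mk ((IsLocalRing.maximalIdeal R).map (algebraMap R T)) x = a := by
      intro a ha
      obtain ⟨x, rfl⟩ := Ideal.Quotient.mk_surjective a
      refine ⟨x, ?_, rfl⟩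
      by_contra hx
      have hxu : IsUnit x := by
        by_contra h'
        exact hx ((IsLocalRing.mem_maximalIdeal x).mpr (mem_nonunits_iff.mpr h'))
      exact (mem_nonunits_iff.mp ((IsLocalRing.mem_maximalIdeal _).mp ha)) (hxu.map _)
    have hkill : ∀ a ∈ IsLocalRing.maximalIdeal
        (T ⧸ (IsLocalRing.maximalIdeal R).map (algebraMap R T)), a * s = 0 := by
      intro a ha
      obtain ⟨x, hx, rfl⟩ := hnA_lift a ha
      exact hs_socle x hx
    have hgen' : ∀ t : T ⧸ (IsLocalRing.maximalIdeal R).map (algebraMap R T),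
        (∀ a ∈ IsLocalRing.maximalIdeal
          (T ⧸ (IsLocalRing.maximalIdeal R).map (algebraMap R T)), a * t = 0) →
        ∃ c, t = c * s := by
      intro t ht
      obtain ⟨r, hr⟩ := hs_gen t (fun x hx => ht _ (hmem_nA x hx))
      exact ⟨_, hr⟩
    haveI : Module.Finite R (T ⧸ (IsLocalRing.maximalIdeal R).map (algebraMap R T)) :=
      Module.Finite.of_surjective (Ideal.Quotient.mkₐ R _).toLinearMap
        Ideal.Quotient.mk_surjective
    letI : Field (R ⧸ IsLocalRing.maximalIdeal R) := Ideal.Quotient.field _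
    haveI : Module.Finite (R ⧸ IsLocalRing.maximalIdeal R)
        (T ⧸ (IsLocalRing.maximalIdeal R).map (algebraMap R T)) :=
      Module.Finite.of_restrictScalars_finite R _ _
    haveI : IsArtinianRing (T ⧸ (IsLocalRing.maximalIdeal R).map (algebraMap R T)) :=
      IsArtinianRing.of_finite (R ⧸ IsLocalRing.maximalIdeal R) _
    have hnil : IsNilpotent (IsLocalRing.maximalIdeal
        (T ⧸ (IsLocalRing.maximalIdeal R).map (algebraMap R T))) := by
      rw [← IsLocalRing.jacobson_eq_maximalIdeal
        (⊥ : Ideal (T ⧸ (IsLocalRing.maximalIdeal R).map (algebraMap R T))) bot_ne_top]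
      exact IsArtinianRing.isNilpotent_jacobson_bot
    have hsocle := socle_divides hnil s hkill hgen'
    -- the functional ψ
    obtain ⟨u, hu⟩ := Ideal.Quotient.mk_surjective s
    obtain ⟨i₀, hi₀⟩ : ∃ i, b.repr u i ∉ IsLocalRing.maximalIdeal R := by
      by_contra hc
      push_neg at hc
      exact hs_ne (by
        rw [← hu, Ideal.Quotient.eq_zero_iff_mem]
        exact (mem_map_iff_coord b _ u).mpr hc)
    set ψ : T →ₗ[R] R := b.coord i₀ with hψdef
    have hψ_mT : ∀ x ∈ (IsLocalRing.maximalIdeal R).map (algebraMap R T),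
        ψ x ∈ IsLocalRing.maximalIdeal R :=
      fun x hx => (mem_map_iff_coord b _ x).mp hx i₀
    have hψ_key : ∀ z : T, z ∉ (IsLocalRing.maximalIdeal R).map (algebraMap R T) →
        ∃ x : T, ψ (z * x) ∉ IsLocalRing.maximalIdeal R := by
      intro z hz
      have hz0 : Ideal.Quotient.mk ((IsLocalRing.maximalIdeal R).map (algebraMap R T)) z ≠ 0 :=
        fun h => hz (Ideal.Quotient.eq_zero_iff_mem.mp h)
      obtain ⟨c, hc⟩ := hsocle _ hz0
      obtain ⟨x, rfl⟩ := Ideal.Quotient.mk_surjective c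
      refine ⟨x, fun hmem => ?_⟩
      have hmk : Ideal.Quotient.mk ((IsLocalRing.maximalIdeal R).map (algebraMap R T)) (z * x) =
          Ideal.Quotient.mk ((IsLocalRing.maximalIdeal R).map (algebraMap R T)) u := by
        rw [map_mul, mul_comm, hc, hu]
      have h2 := hψ_mT _ (Ideal.Quotient.eq.mp hmk)
      rw [map_sub] at h2
      have h3 : ψ u ∈ IsLocalRing.maximalIdeal R := by
        have := Ideal.sub_mem _ hmem h2
        simpa using this
      exact hi₀ (by simpa [hψdef, Module.Basis.coord_apply] using h3)
    -- matrix over the residue field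
    have hmulsum : ∀ (r : Module.Free.ChooseBasisIndex R T → R) (t : T),
        ψ (t * ∑ j, r j • b j) = ∑ j, r j * ψ (t * b j) := by
      intro r t
      rw [Finset.mul_sum, map_sum]
      exact Finset.sum_congr rfl fun j _ => by rw [mul_smul_comm, map_smul, smul_eq_mul]
    set q : R →+* IsLocalRing.ResidueField R := IsLocalRing.residue R with hqdef
    set G : Matrix (Module.Free.ChooseBasisIndex R T) (Module.Free.ChooseBasisIndex R T)
        (IsLocalRing.ResidueField R) := Matrix.of fun i j => q (ψ (b i * b j)) with hGdef
    have hGsurj : Function.Surjective G.mulVecLin := by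
      rw [← LinearMap.injective_iff_surjective]
      refine (injective_iff_map_eq_zero _).mpr ?_
      intro c hc
      have hc' : G.mulVec c = 0 := by rw [← Matrix.mulVecLin_apply, hc]
      choose r hr using fun i => IsLocalRing.residue_surjective (R := R) (c i)
      set z := ∑ j, r j • b j with hz
      have hcoord : ∀ i, ψ (b i * z) ∈ IsLocalRing.maximalIdeal R := by
        intro i
        have h1 : q (ψ (b i * z)) = G.mulVec c i := by
          rw [hz, hmulsum, map_sum]
          simp only [Matrix.mulVec, dotProduct, Matrix.of_apply, hGdef]
          exact Finset.sum_congr rfl fun j _ => by rw [map_mul, hr j, mul_comm]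
        rw [hc'] at h1
        have h1' : q (ψ (b i * z)) = 0 := by rw [h1]; rfl
        exact (IsLocalRing.residue_eq_zero_iff _).mp h1'
      have hzmT : z ∈ (IsLocalRing.maximalIdeal R).map (algebraMap R T) := by
        by_contra hznot
        obtain ⟨x, hx⟩ := hψ_key z hznot
        apply hx
        have hzx : ψ (z * x) = ∑ i, b.repr x i * ψ (z * b i) := by
          conv_lhs => rw [← b.sum_repr x]
          exact hmulsum _ _
        rw [hzx]
        exact Submodule.sum_mem _ fun i _ =>
          Ideal.mul_mem_left _ _ (by rw [mul_comm]; exact hcoord i)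
      have hrm : ∀ i, r i ∈ IsLocalRing.maximalIdeal R := by
        intro i
        have := (mem_map_iff_coord b _ z).mp hzmT i
        rwa [hz, b.repr_sum_self] at this
      funext i
      have : q (r i) = 0 := (IsLocalRing.residue_eq_zero_iff _).mpr (hrm i)
      rw [Pi.zero_apply, ← hr i]
      exact this
    -- the evaluation map Θ and Nakayama
    set Θ : T →ₗ[R] (T →ₗ[R] R) :=
      { toFun := fun z => ψ ∘ₗ (LinearMap.mul R T z)
        map_add' := fun x y => by
          ext t
          simp [LinearMap.mul_apply', add_mul]
        map_smul' := fun c x => by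
          ext t
          simp [LinearMap.mul_apply', smul_mul_assoc] } with hΘdef
    have hΘ_apply : ∀ z t, Θ z t = ψ (z * t) := fun z t => by
      simp [hΘdef, LinearMap.mul_apply']
    haveI : Module.Finite R (T →ₗ[R] R) := Module.Finite.of_basis b.dualBasis
    have hrange : LinearMap.range Θ = ⊤ := by
      have hsup : ∀ φ : T →ₗ[R] R, φ ∈ LinearMap.range Θ ⊔
          (IsLocalRing.maximalIdeal R • ⊤ : Submodule R (T →ₗ[R] R)) := by
        intro φ
        obtain ⟨c, hc⟩ := hGsurj (fun i => q (φ (b i)))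
        choose r hr using fun i => IsLocalRing.residue_surjective (R := R) (c i)
        set z := ∑ j, r j • b j with hz
        have hdiff : ∀ i, φ (b i) - ψ (z * b i) ∈ IsLocalRing.maximalIdeal R := by
          intro i
          have h1 : q (ψ (b i * z)) = q (φ (b i)) := by
            have h2 : q (ψ (b i * z)) = G.mulVec c i := by
              rw [hz, hmulsum, map_sum]
              simp only [Matrix.mulVec, dotProduct, Matrix.of_apply, hGdef]
              exact Finset.sum_congr rfl fun j _ => by rw [map_mul, hr j, mul_comm]
            rw [h2, ← Matrix.mulVecLin_apply, hc]
          have h3 : q (φ (b i) - ψ (z * b i)) = 0 := by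
            rw [map_sub, mul_comm z (b i), h1, sub_self]
          exact (IsLocalRing.residue_eq_zero_iff _).mp h3
        refine Submodule.mem_sup.mpr ⟨Θ z, LinearMap.mem_range_self _ z, φ - Θ z, ?_, by abel⟩
        rw [mem_smul_top_iff_coord b.dualBasis]
        intro i
        rw [Module.Basis.dualBasis_repr]
        have : (φ - Θ z) (b i) = φ (b i) - ψ (z * b i) := by
          rw [LinearMap.sub_apply, hΘ_apply]
        rw [this]
        exact hdiff i
      haveI : Module.Finite R ((T →ₗ[R] R) ⧸ LinearMap.range Θ) :=
        Module.Finite.of_surjective (LinearMap.range Θ).mkQ (Submodule.mkQ_surjective _)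
      have hq : ∀ x : (T →ₗ[R] R) ⧸ (LinearMap.range Θ),
          x ∈ (IsLocalRing.maximalIdeal R • ⊤ : Submodule R _) := by
        intro x
        obtain ⟨φ, rfl⟩ := Submodule.mkQ_surjective _ x
        obtain ⟨ν, hν, w, hw, hsum⟩ := Submodule.mem_sup.mp (hsup φ)
        have h0 : (LinearMap.range Θ).mkQ φ = (LinearMap.range Θ).mkQ w := by
          rw [← hsum, map_add]
          have : (LinearMap.range Θ).mkQ ν = 0 := by
            rw [Submodule.mkQ_apply, Submodule.Quotient.mk_eq_zero]
            exact hν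
          rw [this, zero_add]
        rw [h0]
        have hmem : (LinearMap.range Θ).mkQ w ∈
            Submodule.map (LinearMap.range Θ).mkQ (IsLocalRing.maximalIdeal R • ⊤) :=
          ⟨w, hw, rfl⟩
        rw [Submodule.map_smul''] at hmem
        exact (smul_mono_right _ le_top : _ • _ ≤ IsLocalRing.maximalIdeal R •
          (⊤ : Submodule R ((T →ₗ[R] R) ⧸ LinearMap.range Θ))) hmem
      have htop : (⊤ : Submodule R ((T →ₗ[R] R) ⧸ LinearMap.range Θ)) = ⊥ :=
        Submodule.eq_bot_of_le_smul_of_le_jacobson_bot (IsLocalRing.maximalIdeal R) ⊤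
          (Module.finite_def.mp inferInstance) (fun x _ => hq x)
          (IsLocalRing.maximalIdeal_le_jacobson ⊥)
      rw [← Submodule.Quotient.subsingleton_iff]
      refine subsingleton_of_forall_eq 0 fun x => ?_
      have hx : x ∈ (⊤ : Submodule R _) := Submodule.mem_top
      rw [htop] at hx
      simpa using hx
    -- conclusion
    set φ : T →ₗ[R] R := ρ ∘ₗ (Ideal.Quotient.mkₐ R J).toLinearMap with hφdef
    have hφJ : ∀ x ∈ J, φ x = 0 := by
      intro x hx
      have h1 : (Ideal.Quotient.mkₐ R J) x = 0 := by
        rw [Ideal.Quotient.mkₐ_eq_mk]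
        exact Ideal.Quotient.eq_zero_iff_mem.mpr hx
      simp [hφdef, h1, Ideal.Quotient.eq_zero_iff_mem.mpr hx]
    have hφ1 : φ 1 = 1 := by
      have h1 : (Ideal.Quotient.mkₐ R J) (1 : T) = 1 := map_one _
      simp [hφdef, h1, hρ]
    obtain ⟨z, hzΘ⟩ := LinearMap.range_eq_top.mp hrange φ
    have hzψ : ∀ x, ψ (z * x) = φ x := fun x => by
      rw [← hzΘ]
      exact (hΘ_apply z x).symm
    have hzJ : z ∈ Submodule.annihilator J := by
      rw [Submodule.mem_annihilator]
      intro jx hjx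
      have hall : ∀ i, b.repr (z * jx) i = 0 := by
        intro i
        obtain ⟨t, ht⟩ := LinearMap.range_eq_top.mp hrange (b.coord i)
        have h1 : b.coord i (z * jx) = ψ (t * (z * jx)) := by
          rw [← ht, hΘ_apply]
        rw [Module.Basis.coord_apply] at h1
        rw [h1]
        have h2 : t * (z * jx) = z * (jx * t) := by ring
        rw [h2, hzψ]
        exact hφJ _ (Ideal.mul_mem_right _ _ hjx)
      have hz0 : z * jx = 0 := by
        have h0 : b.repr (z * jx) = 0 := by
          ext i
          simpa using hall i
        exact (LinearEquiv.map_eq_zero_iff _).mp h0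
      simpa [smul_eq_mul] using hz0
    have hzmem := hle hzJ
    have hfin : ψ (z * 1) ∈ IsLocalRing.maximalIdeal R := by
      rw [mul_one]
      exact hψ_mT z hzmem
    rw [hzψ, hφ1] at hfin
    exact (IsLocalRing.maximalIdeal.isMaximal R).ne_top ((Ideal.eq_top_iff_one _).mpr hfin)
  · -- easy direction
    intro h
    obtain ⟨z, hz_ann, hz_not⟩ := SetLike.not_le_iff_exists.mp h
    have hzJ : ∀ x ∈ J, z * x = 0 := fun x hx => Submodule.mem_annihilator.mp hz_ann x hx
    obtain ⟨i, hi⟩ : ∃ i, b.repr z i ∉ IsLocalRing.maximalIdeal R := by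
      by_contra hc
      push_neg at hc
      exact hz_not ((mem_map_iff_coord b _ z).mpr hc)
    have hu : IsUnit (b.repr z i) := by
      by_contra h'
      exact hi ((IsLocalRing.mem_maximalIdeal _).mpr (mem_nonunits_iff.mpr h'))
    let μ : (T ⧸ J) →ₗ[T] T :=
      Submodule.liftQ J ((LinearMap.mul T T) z)
        (fun x hx => by simpa [LinearMap.mul_apply'] using hzJ x hx)
    refine ⟨(hu.unit⁻¹ : Rˣ) • (b.coord i ∘ₗ μ.restrictScalars R), ?_⟩
    have h1 : μ 1 = z := by
      show μ (Submodule.Quotient.mk 1) = z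
      rw [Submodule.liftQ_apply, LinearMap.mul_apply', mul_one]
    have : (b.coord i ∘ₗ μ.restrictScalars R) 1 = b.repr z i := by
      simp only [LinearMap.comp_apply, LinearMap.restrictScalars_apply, h1, Module.Basis.coord_apply]
    rw [LinearMap.smul_apply, this, Units.smul_def]
    calc (↑hu.unit⁻¹ : R) * b.repr z i = ↑hu.unit⁻¹ * ↑hu.unit := by rw [IsUnit.unit_spec]
    _ = 1 := Units.inv_mul _
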